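/- Let G be a finite abelian group, let H be a subgroup of G of index 2, let B = G \ H, let S ⊆ H be a sum-free set, and let t = |{x ∈ G : x + x = 0}|. Then N₁ + N₂ ≥ (|S ∪ (−S)| + |S|)·|B|/2 − |S|·|S ∪ (−S)|·t, where N₁ is the number of unordered pairs {x, y} of distinct elements of B with x + y ∈ S or x − y ∈ S ∪ (−S), and N₂ is the number of x ∈ B with x + x ∈ S. -/

import Mathlib

open Pointwise

/-- A subset `A` of an additive group is *sum-free* if there are no
`x, y, z ∈ A` (not necessarily distinct) with `x + y = z`. -/
def IsSumFree {G : Type*} [AddCommGroup G] (A : Set G) : Prop :=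
  ∀ x ∈ A, ∀ y ∈ A, x + y ∉ A

open Finset in
private lemma double_fiber_le {G : Type*} [AddCommGroup G] [Fintype G]
    [DecidableEq G] (c : G) :
    (Finset.univ.filter fun x : G => x + x = c).card ≤
      (Finset.univ.filter fun x : G => x + x = 0).card := by
  classical
  rcases (Finset.univ.filter fun x : G => x + x = c).eq_empty_or_nonempty with h | ⟨x₀, hx₀⟩
  · simp [h]
  · simp only [Finset.mem_filter] at hx₀
    apply Finset.card_le_card_of_injOn (fun x => x - x₀)
    · intro x hx
      simp only [Finset.mem_coe, Finset.mem_filter, Finset.mem_univ, true_and] at hx ⊢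
      have : x + x = x₀ + x₀ := by rw [hx, hx₀.2]
      abel_nf
      abel_nf at this
      simp [this]
    · intro a _ b _ hab
      simpa using sub_left_injective hab

/-- Lower bound on the number of edges of the link graph `L_S[B]`: with `B` the
nontrivial coset of an index-2 subgroup, `S ⊆ H` sum-free, and `t` the number of
solutions of `x + x = 0` in `G`, the number `N₁` of unordered adjacent pairs plus the
number `N₂` of loops of the form `x + x ∈ S` is at least
`(|S ∪ (−S)| + |S|)·|B|/2 − |S|·|S ∪ (−S)|·t`. -/
theorem edge_count_of_link_graph
    {G : Type*} [AddCommGroup G] [Fintype G]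
    (H : AddSubgroup G) (hidx : H.index = 2)
    (B : Set G) (hB : B = (H : Set G)ᶜ)
    (S : Set G) (hSH : S ⊆ (H : Set G)) (hSF : IsSumFree S)
    (t : ℕ) (ht : t = {x : G | x + x = 0}.ncard)
    (N₁ N₂ : ℕ)
    (hN₁ : N₁ = {p : Sym2 G | ∃ x y : G, p = s(x, y) ∧ x ∈ B ∧ y ∈ B ∧ x ≠ y ∧
        (x + y ∈ S ∨ x - y ∈ S ∪ -S)}.ncard)
    (hN₂ : N₂ = {x ∈ B | x + x ∈ S}.ncard) :
    (N₁ : ℝ) + N₂ ≥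
      (((S ∪ -S).ncard : ℝ) + S.ncard) * B.ncard / 2
        - (S.ncard : ℝ) * (S ∪ -S).ncard * t := by
  classical
  set U : Set G := S ∪ -S with hU
  -- Basic membership facts
  have hUH : U ⊆ (H : Set G) := by
    rintro u (hu | hu)
    · exact hSH hu
    · have : -u ∈ (H : Set G) := hSH (Set.mem_neg.mp hu)
      simpa using H.neg_mem this
  have h0S : (0 : G) ∉ S := fun h => hSF 0 h 0 h (by simpa using h)
  have h0U : (0 : G) ∉ U := by
    rintro (h | h)
    · exact h0S h
    · exact h0S (by simpa using Set.mem_neg.mp h)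
  have hUneg : ∀ u ∈ U, -u ∈ U := by
    rintro u (hu | hu)
    · exact Or.inr (Set.neg_mem_neg.mpr hu)
    · exact Or.inl (by simpa using Set.mem_neg.mp hu)
  have hBmem : ∀ x, x ∈ B ↔ x ∉ (H : Set G) := by
    intro x; rw [hB]; rfl
  have hsubB : ∀ x ∈ B, ∀ h ∈ (H : Set G), h - x ∈ B := by
    intro x hx h hh
    rw [hBmem] at hx ⊢
    intro hmem
    exact hx (by simpa using H.sub_mem hh hmem)
  have hsubB' : ∀ x ∈ B, ∀ h ∈ (H : Set G), x - h ∈ B := by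
    intro x hx h hh
    rw [hBmem] at hx ⊢
    intro hmem
    exact hx (by simpa using H.add_mem hmem hh)
  -- The link graph
  let L : SimpleGraph G :=
    { Adj := fun x y => x ≠ y ∧ x ∈ B ∧ y ∈ B ∧ (x + y ∈ S ∨ x - y ∈ U)
      symm := by
        constructor
        rintro x y ⟨hxy, hx, hy, h⟩
        refine ⟨hxy.symm, hy, hx, ?_⟩
        rcases h with h | h
        · exact Or.inl (by rwa [add_comm])
        · exact Or.inr (by simpa using hUneg _ h)
      loopless := ⟨fun x h => h.1 rfl⟩ }
  have hEdge : {p : Sym2 G | ∃ x y : G, p = s(x, y) ∧ x ∈ B ∧ y ∈ B ∧ x ≠ y ∧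
      (x + y ∈ S ∨ x - y ∈ S ∪ -S)} = L.edgeSet := by
    ext p
    induction p with
    | _ a b =>
      simp only [SimpleGraph.mem_edgeSet, Set.mem_setOf_eq]
      constructor
      · rintro ⟨x, y, hp, hx, hy, hxy, h⟩
        rcases Sym2.eq_iff.mp hp with ⟨rfl, rfl⟩ | ⟨rfl, rfl⟩
        · exact ⟨hxy, hx, hy, h⟩
        · exact L.adj_symm ⟨hxy, hx, hy, h⟩
      · rintro ⟨hab, ha, hb, h⟩
        exact ⟨a, b, rfl, ha, hb, hab, h⟩
  -- Finset versions
  let Apairs : Finset (G × G) :=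
    Finset.univ.filter fun p => p.1 ∈ B ∧ p.2 ∈ B ∧ p.1 + p.2 ∈ S
  let Dpairs : Finset (G × G) :=
    Finset.univ.filter fun p => p.1 ∈ B ∧ p.2 ∈ B ∧ p.1 - p.2 ∈ U
  let Ppairs : Finset (G × G) :=
    Finset.univ.filter fun p => p.1 + p.2 ∈ S ∧ p.1 - p.2 ∈ U
  let diagA : Finset G := Finset.univ.filter fun x => x ∈ B ∧ x + x ∈ S
  let Padj : Finset (G × G) := Finset.univ.filter fun p => L.Adj p.1 p.2
  -- Card of Apairs
  have hAcard : Apairs.card = S.ncard * B.ncard := by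
    rw [Set.ncard_eq_toFinset_card' S, Set.ncard_eq_toFinset_card' B,
      ← Finset.card_product]
    apply Finset.card_bij (fun p _ => (p.1 + p.2, p.1))
    · rintro ⟨x, y⟩ hp
      simp only [Apairs, Finset.mem_filter, Finset.mem_univ, true_and] at hp
      simp only [Finset.mem_product, Set.mem_toFinset]
      exact ⟨hp.2.2, hp.1⟩
    · rintro ⟨x, y⟩ _ ⟨x', y'⟩ _ h
      simp only [Prod.mk.injEq] at h
      obtain ⟨h1, rfl⟩ := h
      have : y = y' := add_left_cancel h1
      simp [this]
    · rintro ⟨s, x⟩ hsx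
      simp only [Finset.mem_product, Set.mem_toFinset] at hsx
      refine ⟨(x, s - x), ?_, by simp⟩
      simp only [Apairs, Finset.mem_filter, Finset.mem_univ, true_and]
      refine ⟨hsx.2, hsubB x hsx.2 s (hSH hsx.1), ?_⟩
      have hxe : x + (s - x) = s := by abel
      rw [hxe]; exact hsx.1
  -- Card of Dpairs
  have hDcard : Dpairs.card = U.ncard * B.ncard := by
    rw [Set.ncard_eq_toFinset_card' U, Set.ncard_eq_toFinset_card' B,
      ← Finset.card_product]
    apply Finset.card_bij (fun p _ => (p.1 - p.2, p.1))
    · rintro ⟨x, y⟩ hp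
      simp only [Dpairs, Finset.mem_filter, Finset.mem_univ, true_and] at hp
      simp only [Finset.mem_product, Set.mem_toFinset]
      exact ⟨hp.2.2, hp.1⟩
    · rintro ⟨x, y⟩ _ ⟨x', y'⟩ _ h
      simp only [Prod.mk.injEq] at h
      obtain ⟨h1, rfl⟩ := h
      have : y = y' := sub_right_injective h1
      simp [this]
    · rintro ⟨u, x⟩ hux
      simp only [Finset.mem_product, Set.mem_toFinset] at hux
      refine ⟨(x, x - u), ?_, by simp⟩
      simp only [Dpairs, Finset.mem_filter, Finset.mem_univ, true_and]
      refine ⟨hux.2, hsubB' x hux.2 u (hUH hux.1), ?_⟩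
      have hxe : x - (x - u) = u := by abel
      rw [hxe]; exact hux.1
  -- diagA has card N₂
  have hdiagA : diagA.card = N₂ := by
    rw [hN₂, Set.ncard_eq_toFinset_card']
    congr 1
    ext x
    simp [diagA, Set.mem_toFinset]
  -- Padj has card 2 * N₁
  have hPadjcard : Padj.card = 2 * N₁ := by
    rw [hN₁, hEdge, Set.ncard_eq_toFinset_card', ← SimpleGraph.edgeFinset,
      SimpleGraph.two_mul_card_edgeFinset]
  -- Ppairs is small
  have hPpairs : Ppairs.card ≤ t * (S.ncard * U.ncard) := by
    have hfib : ∀ c ∈ Ppairs.image (fun p : G × G => (p.1 + p.2, p.1 - p.2)),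
        (Ppairs.filter fun p => (p.1 + p.2, p.1 - p.2) = c).card ≤ t := by
      rintro ⟨s, u⟩ _
      calc (Ppairs.filter fun p => (p.1 + p.2, p.1 - p.2) = (s, u)).card
          ≤ (Finset.univ.filter fun x : G => x + x = s + u).card := by
            apply Finset.card_le_card_of_injOn (fun p => p.1)
            · rintro ⟨x, y⟩ hp
              simp only [Finset.mem_coe, Finset.mem_filter, Prod.mk.injEq] at hp
              obtain ⟨-, h1, h2⟩ := hp
              simp only [Finset.mem_coe, Finset.mem_filter, Finset.mem_univ, true_and]
              rw [← h1, ← h2]; abel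
            · rintro ⟨x, y⟩ hx ⟨x', y'⟩ hy h
              simp only [Finset.mem_coe, Finset.mem_filter, Prod.mk.injEq] at hx hy
              simp only at h
              subst h
              have : y = y' := by
                have := hx.2.1.trans hy.2.1.symm
                exact add_left_cancel this
              simp [this]
        _ ≤ (Finset.univ.filter fun x : G => x + x = 0).card := double_fiber_le _
        _ = t := by
            rw [ht, Set.ncard_eq_toFinset_card']
            congr 1
            ext x
            simp [Set.mem_toFinset]
    calc Ppairs.card ≤ t * (Ppairs.image fun p : G × G => (p.1 + p.2, p.1 - p.2)).card :=
          Finset.card_le_mul_card_image _ t hfib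
      _ ≤ t * (S.ncard * U.ncard) := by
          apply Nat.mul_le_mul_left
          rw [Set.ncard_eq_toFinset_card' S, Set.ncard_eq_toFinset_card' U,
            ← Finset.card_product]
          apply Finset.card_le_card
          intro c hc
          simp only [Finset.mem_image] at hc
          obtain ⟨⟨x, y⟩, hp, rfl⟩ := hc
          simp only [Ppairs, Finset.mem_filter, Finset.mem_univ, true_and] at hp
          simp only [Finset.mem_product, Set.mem_toFinset]
          exact hp
  -- Union bound
  have hsub : Apairs ∪ Dpairs ⊆ Padj ∪ diagA.image (fun x => (x, x)) := by
    rintro ⟨x, y⟩ hp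
    rcases eq_or_ne x y with rfl | hxy
    · rcases Finset.mem_union.mp hp with hp | hp
      · simp only [Apairs, Finset.mem_filter, Finset.mem_univ, true_and] at hp
        apply Finset.mem_union_right
        simp only [Finset.mem_image, diagA, Finset.mem_filter, Finset.mem_univ, true_and,
          Prod.mk.injEq]
        exact ⟨x, ⟨hp.1, hp.2.2⟩, rfl, rfl⟩
      · simp only [Dpairs, Finset.mem_filter, Finset.mem_univ, true_and] at hp
        exact absurd (by simpa using hp.2.2) h0U
    · apply Finset.mem_union_left
      simp only [Padj, Finset.mem_filter, Finset.mem_univ, true_and]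
      rcases Finset.mem_union.mp hp with hp | hp
      · simp only [Apairs, Finset.mem_filter, Finset.mem_univ, true_and] at hp
        exact ⟨hxy, hp.1, hp.2.1, Or.inl hp.2.2⟩
      · simp only [Dpairs, Finset.mem_filter, Finset.mem_univ, true_and] at hp
        exact ⟨hxy, hp.1, hp.2.1, Or.inr hp.2.2⟩
  have hinter : Apairs ∩ Dpairs ⊆ Ppairs := by
    rintro ⟨x, y⟩ hp
    simp only [Apairs, Dpairs, Finset.mem_inter, Finset.mem_filter, Finset.mem_univ,
      true_and] at hp
    simp only [Ppairs, Finset.mem_filter, Finset.mem_univ, true_and]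
    exact ⟨hp.1.2.2, hp.2.2.2⟩
  -- The key natural-number inequality
  have key : S.ncard * B.ncard + U.ncard * B.ncard
      ≤ 2 * N₁ + N₂ + t * (S.ncard * U.ncard) := by
    calc S.ncard * B.ncard + U.ncard * B.ncard
        = Apairs.card + Dpairs.card := by rw [hAcard, hDcard]
      _ = (Apairs ∪ Dpairs).card + (Apairs ∩ Dpairs).card :=
          (Finset.card_union_add_card_inter _ _).symm
      _ ≤ (Padj ∪ diagA.image (fun x => (x, x))).card + Ppairs.card :=
          Nat.add_le_add (Finset.card_le_card hsub) (Finset.card_le_card hinter)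
      _ ≤ (Padj.card + (diagA.image (fun x => (x, x))).card) + Ppairs.card :=
          Nat.add_le_add_right (Finset.card_union_le _ _) _
      _ ≤ (2 * N₁ + N₂) + t * (S.ncard * U.ncard) := by
          apply Nat.add_le_add
          · exact Nat.add_le_add (le_of_eq hPadjcard)
              (le_trans (Finset.card_image_le) (le_of_eq hdiagA))
          · exact hPpairs
      _ = 2 * N₁ + N₂ + t * (S.ncard * U.ncard) := by ring
  -- Conclude over ℝ
  have keyR : (S.ncard : ℝ) * B.ncard + (U.ncard : ℝ) * B.ncard
      ≤ 2 * N₁ + N₂ + t * ((S.ncard : ℝ) * U.ncard) := by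
    exact_mod_cast key
  have hN₂nn : (0 : ℝ) ≤ (N₂ : ℝ) := Nat.cast_nonneg _
  have htnn : (0 : ℝ) ≤ (t : ℝ) * ((S.ncard : ℝ) * U.ncard) := by positivity
  rw [ge_iff_le, sub_le_iff_le_add, div_le_iff₀ (by norm_num : (0:ℝ) < 2)]
  nlinarith [keyR, hN₂nn, htnn]
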